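/- Let H = (V, E) be a hypergraph with a finite relation R_F over each hyperedge F ∈ E, let V_b be a proper subset of V, let u be a fractional edge cover of V, and let α be its slack. Then for every tuple a over V_b, the number of tuples t in the join ⋈_{F∈E} R_F with t[V_b] = a is at most ∏_{F ∈ E} |R_F(a)|^{u_F/α}. -/

import Mathlib

open scoped ENNReal
open Finset

private lemma sum_rpow_le_rpow_sum' {ι : Type*} (s : Finset ι) (a : ι → ℝ≥0∞) {β : ℝ}
    (hβ : 1 ≤ β) : ∑ i ∈ s, a i ^ β ≤ (∑ i ∈ s, a i) ^ β := by
  classical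
  induction s using Finset.induction with
  | empty => simp [ENNReal.zero_rpow_of_pos (by linarith : (0:ℝ) < β)]
  | @insert i s hi ih =>
      rw [Finset.sum_insert hi, Finset.sum_insert hi]
      calc a i ^ β + ∑ j ∈ s, a j ^ β ≤ a i ^ β + (∑ j ∈ s, a j) ^ β := by
            exact add_le_add_right ih _
        _ ≤ (a i + ∑ j ∈ s, a j) ^ β := ENNReal.add_rpow_le_rpow_add _ _ hβ

private lemma holder_sum {ι κ : Type*} (s : Finset ι) (A : Finset κ) (c : κ → ι → ℝ≥0∞)
    (p : κ → ℝ) (hp : ∑ F ∈ A, p F = 1) (hp0 : ∀ F ∈ A, 0 ≤ p F) :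
    ∑ v ∈ s, ∏ F ∈ A, c F v ^ p F ≤ ∏ F ∈ A, (∑ v ∈ s, c F v) ^ p F := by
  classical
  letI : MeasurableSpace {x // x ∈ s} := ⊤
  haveI : MeasurableSingletonClass {x // x ∈ s} := ⟨fun _ => MeasurableSpace.measurableSet_top⟩
  have h := ENNReal.lintegral_prod_norm_pow_le
    (μ := (MeasureTheory.Measure.count : MeasureTheory.Measure {x // x ∈ s})) A
    (f := fun F v => c F v.1)
    (fun F _ => ((measurable_from_top (f := fun v : {x // x ∈ s} => c F v.1))).aemeasurable)
    hp hp0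
  have hl : ∀ f : ι → ℝ≥0∞,
      (∫⁻ v : {x // x ∈ s}, f v.1 ∂(MeasureTheory.Measure.count)) = ∑ v ∈ s, f v := by
    intro f
    rw [MeasureTheory.lintegral_count, tsum_fintype]
    exact Finset.sum_coe_sort s f
  calc ∑ v ∈ s, ∏ F ∈ A, c F v ^ p F
      = ∫⁻ v : {x // x ∈ s}, ∏ F ∈ A, c F v.1 ^ p F ∂(MeasureTheory.Measure.count) :=
        (hl (fun x => ∏ F ∈ A, c F x ^ p F)).symm
    _ ≤ ∏ F ∈ A, (∫⁻ v : {x // x ∈ s}, c F v.1 ∂(MeasureTheory.Measure.count)) ^ p F := h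
    _ = ∏ F ∈ A, (∑ v ∈ s, c F v) ^ p F := by
        exact Finset.prod_congr rfl fun F _ => by rw [hl (c F)]

private lemma holder_slack {ι κ : Type*} (s : Finset ι) (A : Finset κ) (c : κ → ι → ℝ≥0∞)
    (w : κ → ℝ) (hw0 : ∀ F ∈ A, 0 ≤ w F) (hβ : 1 ≤ ∑ F ∈ A, w F) :
    ∑ v ∈ s, ∏ F ∈ A, c F v ^ w F ≤ ∏ F ∈ A, (∑ v ∈ s, c F v) ^ w F := by
  set β := ∑ F ∈ A, w F with hβdef
  have hβ0 : 0 < β := lt_of_lt_of_le one_pos hβ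
  have hmul : ∀ F ∈ A, β * (w F / β) = w F := fun F _ => by field_simp
  have key := holder_sum s A (fun F v => c F v ^ β) (fun F => w F / β)
    (by rw [← Finset.sum_div, ← hβdef, div_self hβ0.ne'])
    (fun F hF => div_nonneg (hw0 F hF) hβ0.le)
  calc ∑ v ∈ s, ∏ F ∈ A, c F v ^ w F
      = ∑ v ∈ s, ∏ F ∈ A, (c F v ^ β) ^ (w F / β) :=
        Finset.sum_congr rfl fun v _ => Finset.prod_congr rfl fun F hF => by
          rw [← ENNReal.rpow_mul, hmul F hF]
    _ ≤ ∏ F ∈ A, (∑ v ∈ s, c F v ^ β) ^ (w F / β) := key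
    _ ≤ ∏ F ∈ A, ((∑ v ∈ s, c F v) ^ β) ^ (w F / β) := by
        refine Finset.prod_le_prod' fun F hF => ?_
        exact ENNReal.rpow_le_rpow (sum_rpow_le_rpow_sum' s (c F) hβ)
          (div_nonneg (hw0 F hF) hβ0.le)
    _ = ∏ F ∈ A, (∑ v ∈ s, c F v) ^ w F :=
        Finset.prod_congr rfl fun F hF => by rw [← ENNReal.rpow_mul, hmul F hF]

section AGM
variable {V : Type*} [Fintype V] [DecidableEq V] {D : V → Type*}

def JoinSet (E : Finset (Finset V)) (R : (F : Finset V) → Set ((x : F) → D x.1))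
    (B : Finset V) (b : (x : V) → x ∈ B → D x) : Set ((x : V) → D x) :=
  {t | (∀ F ∈ E, (fun x : F => t x.1) ∈ R F) ∧ ∀ x (h : x ∈ B), t x = b x h}

def EdgeSet (R : (F : Finset V) → Set ((x : F) → D x.1)) (F : Finset V)
    (B : Finset V) (b : (x : V) → x ∈ B → D x) : Set ((x : F) → D x.1) :=
  {s ∈ R F | ∀ (x : V) (hF : x ∈ F) (hb : x ∈ B), s ⟨x, hF⟩ = b x hb}

lemma edgeSet_finite {E : Finset (Finset V)} {R : (F : Finset V) → Set ((x : F) → D x.1)}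
    (hRfin : ∀ F ∈ E, (R F).Finite) {F : Finset V} (hF : F ∈ E)
    (B : Finset V) (b : (x : V) → x ∈ B → D x) : (EdgeSet R F B b).Finite :=
  (hRfin F hF).subset (Set.sep_subset _ _)

lemma joinSet_finite (E : Finset (Finset V)) (R : (F : Finset V) → Set ((x : F) → D x.1))
    (hRfin : ∀ F ∈ E, (R F).Finite) (B : Finset V) (b : (x : V) → x ∈ B → D x)
    (hcov : ∀ x ∉ B, ∃ F ∈ E, x ∈ F) : (JoinSet E R B b).Finite := by
  have h1 : (Set.pi Set.univ (fun F : E => R F.1)).Finite :=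
    Set.Finite.pi (fun F : E => hRfin F.1 F.2)
  apply Set.Finite.of_finite_image (f := fun t (F : E) (x : F.1) => t x.1)
  · refine h1.subset ?_
    rintro _ ⟨t, ht, rfl⟩
    exact fun F _ => ht.1 F.1 F.2
  · intro t ht t' ht' h
    funext y
    by_cases hy : y ∈ B
    · rw [ht.2 y hy, ht'.2 y hy]
    · obtain ⟨F, hF, hyF⟩ := hcov y hy
      exact congrFun (congrFun h ⟨F, hF⟩) ⟨y, hyF⟩

lemma agm_key (E : Finset (Finset V)) (R : (F : Finset V) → Set ((x : F) → D x.1))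
    (hRfin : ∀ F ∈ E, (R F).Finite) (w : Finset V → ℝ) (hw0 : ∀ F ∈ E, 0 ≤ w F) :
    ∀ (n : ℕ) (B : Finset V), Bᶜ.card = n →
      (∀ x ∉ B, 1 ≤ ∑ F ∈ E, if x ∈ F then w F else 0) →
      ∀ b : (x : V) → x ∈ B → D x,
      ((JoinSet E R B b).ncard : ℝ≥0∞) ≤ ∏ F ∈ E, ((EdgeSet R F B b).ncard : ℝ≥0∞) ^ w F := by
  intro n
  induction n with
  | zero =>
    intro B hB hcov b
    have hBuniv : B = Finset.univ := by
      rwa [Finset.card_eq_zero, Finset.compl_eq_empty_iff] at hB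
    subst hBuniv
    rcases Set.eq_empty_or_nonempty (JoinSet E R Finset.univ b) with he | ⟨t, ht⟩
    · simp [he]
    · have hone : ∀ F ∈ E, 1 ≤ ((EdgeSet R F Finset.univ b).ncard : ℝ≥0∞) := by
        intro F hF
        have hmem : (fun x : F => t x.1) ∈ EdgeSet R F Finset.univ b :=
          ⟨ht.1 F hF, fun y hyF hb => ht.2 y hb⟩
        have h := (Set.ncard_pos (edgeSet_finite hRfin hF _ b)).mpr ⟨_, hmem⟩
        exact_mod_cast h
      have h1 : (JoinSet E R Finset.univ b).ncard ≤ 1 := by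
        refine le_trans (Set.ncard_le_ncard ?_ (Set.finite_singleton
          (fun y => b y (Finset.mem_univ y)))) (le_of_eq (Set.ncard_singleton _))
        intro t' ht'
        exact funext fun y => ht'.2 y (Finset.mem_univ y)
      calc ((JoinSet E R Finset.univ b).ncard : ℝ≥0∞) ≤ 1 := by exact_mod_cast h1
        _ ≤ ∏ F ∈ E, ((EdgeSet R F Finset.univ b).ncard : ℝ≥0∞) ^ w F :=
            Finset.one_le_prod' fun F hF => by
              rw [← ENNReal.one_rpow (w F)]
              exact ENNReal.rpow_le_rpow (hone F hF) (hw0 F hF)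
  | succ n ih =>
    intro B hB hcov b
    classical
    obtain ⟨x, hxc⟩ := Finset.card_pos.mp (show 0 < Bᶜ.card by rw [hB]; omega)
    have hx : x ∉ B := Finset.mem_compl.mp hxc
    have hcovx : ∀ y ∉ B, ∃ F ∈ E, y ∈ F := by
      intro y hy
      by_contra hno
      push_neg at hno
      have h0 : ∑ F ∈ E, (if y ∈ F then w F else 0) = 0 :=
        Finset.sum_eq_zero fun F hF => by simp [hno F hF]
      have := hcov y hy
      rw [h0] at this
      linarith
    have hT : (JoinSet E R B b).Finite := joinSet_finite E R hRfin B b hcovx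
    set Tfin := hT.toFinset with hTfin
    set img : Finset (D x) := Tfin.image (fun t => t x) with himg
    set b' : D x → (y : V) → y ∈ insert x B → D y := fun v y h =>
      if hyx : y = x then cast (congrArg D hyx).symm v
      else b y ((Finset.mem_insert.1 h).resolve_left hyx) with hb'
    have hb'x : ∀ v, b' v x (Finset.mem_insert_self x B) = v := fun v => by simp [hb']
    have hb'B : ∀ v y (hyB : y ∈ B) (h : y ∈ insert x B), b' v y h = b y hyB := by
      intro v y hyB h
      have hyx : y ≠ x := fun hh => hx (hh ▸ hyB)
      simp [hb', hyx]
    have hB' : (insert x B)ᶜ.card = n := by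
      rw [Finset.compl_insert, Finset.card_erase_of_mem hxc, hB]
      omega
    have hcov' : ∀ y ∉ insert x B, 1 ≤ ∑ F ∈ E, if y ∈ F then w F else 0 := fun y hy =>
      hcov y (fun h => hy (Finset.mem_insert_of_mem h))
    -- fibers
    have hfib : ∀ v : D x, JoinSet E R (insert x B) (b' v)
        = ↑(Tfin.filter (fun t => t x = v)) := by
      intro v
      ext t
      simp only [Finset.coe_filter, Set.mem_setOf_eq, Finset.mem_filter,
        Set.Finite.mem_toFinset, hTfin]
      constructor
      · rintro ⟨h1, h2⟩
        refine ⟨⟨h1, fun y hy => by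
          rw [h2 y (Finset.mem_insert_of_mem hy)]
          exact hb'B v y hy (Finset.mem_insert_of_mem hy)⟩, ?_⟩
        rw [h2 x (Finset.mem_insert_self x B), hb'x]
      · rintro ⟨⟨h1, h2⟩, h3⟩
        refine ⟨h1, fun y hy => ?_⟩
        by_cases hyx : y = x
        · subst hyx
          rw [h3, hb'x]
        · have hyB : y ∈ B := (Finset.mem_insert.1 hy).resolve_left hyx
          rw [h2 y hyB]
          exact (hb'B v y hyB hy).symm
    -- counting
    have hcount : (JoinSet E R B b).ncard
        = ∑ v ∈ img, (JoinSet E R (insert x B) (b' v)).ncard := by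
      rw [Set.ncard_eq_toFinset_card _ hT, ← hTfin]
      rw [Finset.card_eq_sum_card_fiberwise
        (f := fun t => t x) (t := img) (fun t ht => Finset.mem_image_of_mem _ ht)]
      exact Finset.sum_congr rfl fun v _ => by rw [hfib v, Set.ncard_coe_finset]
    -- edge set rewriting
    have hE0 : ∀ (v : D x), ∀ F ∈ E, x ∉ F →
        EdgeSet R F (insert x B) (b' v) = EdgeSet R F B b := by
      intro v F _ hxF
      ext s
      simp only [EdgeSet, Set.mem_setOf_eq]
      constructor
      · rintro ⟨h1, h2⟩
        refine ⟨h1, fun y hyF hyB => ?_⟩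
        rw [h2 y hyF (Finset.mem_insert_of_mem hyB)]
        exact hb'B v y hyB (Finset.mem_insert_of_mem hyB)
      · rintro ⟨h1, h2⟩
        refine ⟨h1, fun y hyF hyB' => ?_⟩
        have hyx : y ≠ x := fun hh => hxF (hh ▸ hyF)
        have hyB : y ∈ B := (Finset.mem_insert.1 hyB').resolve_left hyx
        rw [h2 y hyF hyB]
        exact (hb'B v y hyB hyB').symm
    have hE1 : ∀ (v : D x), ∀ F ∈ E, ∀ (hxF : x ∈ F),
        EdgeSet R F (insert x B) (b' v)
          = {s ∈ EdgeSet R F B b | s ⟨x, hxF⟩ = v} := by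
      intro v F _ hxF
      ext s
      simp only [EdgeSet, Set.mem_setOf_eq]
      constructor
      · rintro ⟨h1, h2⟩
        refine ⟨⟨h1, fun y hyF hyB => by
          rw [h2 y hyF (Finset.mem_insert_of_mem hyB)]
          exact hb'B v y hyB (Finset.mem_insert_of_mem hyB)⟩, ?_⟩
        rw [h2 x hxF (Finset.mem_insert_self x B), hb'x]
      · rintro ⟨⟨h1, h2⟩, h3⟩
        refine ⟨h1, fun y hyF hyB' => ?_⟩
        by_cases hyx : y = x
        · subst hyx
          rw [h3, hb'x]
        · have hyB : y ∈ B := (Finset.mem_insert.1 hyB').resolve_left hyx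
          rw [h2 y hyF hyB]
          exact (hb'B v y hyB hyB').symm
    -- the per-edge sum bound for edges containing x
    have hsum : ∀ F ∈ E, ∀ (hxF : x ∈ F),
        ∑ v ∈ img, ((EdgeSet R F (insert x B) (b' v)).ncard : ℝ≥0∞)
          ≤ ((EdgeSet R F B b).ncard : ℝ≥0∞) := by
      intro F hF hxF
      have hSfin : (EdgeSet R F B b).Finite := edgeSet_finite hRfin hF B b
      set SF := hSfin.toFinset with hSF
      have hsub : ∀ v : D x, EdgeSet R F (insert x B) (b' v)
          = ↑(SF.filter (fun s => s ⟨x, hxF⟩ = v)) := by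
        intro v
        rw [hE1 v F hF hxF]
        ext s
        simp [hSF, Set.Finite.mem_toFinset]
      have hcards : ∑ v ∈ img, (SF.filter (fun s => s ⟨x, hxF⟩ = v)).card ≤ SF.card := by
        rw [← Finset.card_biUnion]
        · exact Finset.card_le_card (Finset.biUnion_subset.mpr
            (fun v _ => Finset.filter_subset _ _))
        · intro v _ v' _ hvv'
          show Disjoint _ _
          rw [Finset.disjoint_left]
          intro s hs hs'
          have h1 := (Finset.mem_filter.1 hs).2
          have h2 := (Finset.mem_filter.1 hs').2
          exact hvv' (h1 ▸ h2 ▸ rfl)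
      calc ∑ v ∈ img, ((EdgeSet R F (insert x B) (b' v)).ncard : ℝ≥0∞)
          = ∑ v ∈ img, (((SF.filter (fun s => s ⟨x, hxF⟩ = v)).card : ℕ) : ℝ≥0∞) :=
            Finset.sum_congr rfl fun v _ => by rw [hsub v, Set.ncard_coe_finset]
        _ ≤ ((SF.card : ℕ) : ℝ≥0∞) := by
            rw [← Nat.cast_sum]
            exact_mod_cast hcards
        _ = ((EdgeSet R F B b).ncard : ℝ≥0∞) := by
            rw [Set.ncard_eq_toFinset_card _ hSfin]
    -- assemble
    have hβ : 1 ≤ ∑ F ∈ E.filter (fun F => x ∈ F), w F := by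
      rw [Finset.sum_filter]
      exact hcov x hx
    calc ((JoinSet E R B b).ncard : ℝ≥0∞)
        = ∑ v ∈ img, ((JoinSet E R (insert x B) (b' v)).ncard : ℝ≥0∞) := by
          rw [hcount]
          exact Nat.cast_sum _ _
      _ ≤ ∑ v ∈ img, ∏ F ∈ E, ((EdgeSet R F (insert x B) (b' v)).ncard : ℝ≥0∞) ^ w F :=
          Finset.sum_le_sum fun v _ => ih (insert x B) hB' hcov' (b' v)
      _ = ∑ v ∈ img, ((∏ F ∈ E.filter (fun F => x ∈ F),
              ((EdgeSet R F (insert x B) (b' v)).ncard : ℝ≥0∞) ^ w F) *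
            ∏ F ∈ E.filter (fun F => ¬ x ∈ F), ((EdgeSet R F B b).ncard : ℝ≥0∞) ^ w F) := by
          refine Finset.sum_congr rfl fun v _ => ?_
          rw [← Finset.prod_filter_mul_prod_filter_not E (fun F => x ∈ F)]
          congr 1
          refine Finset.prod_congr rfl fun F hF => ?_
          obtain ⟨hFE, hxF⟩ := Finset.mem_filter.1 hF
          rw [hE0 v F hFE hxF]
      _ = (∑ v ∈ img, ∏ F ∈ E.filter (fun F => x ∈ F),
              ((EdgeSet R F (insert x B) (b' v)).ncard : ℝ≥0∞) ^ w F) *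
            ∏ F ∈ E.filter (fun F => ¬ x ∈ F), ((EdgeSet R F B b).ncard : ℝ≥0∞) ^ w F := by
          rw [← Finset.sum_mul]
      _ ≤ (∏ F ∈ E.filter (fun F => x ∈ F),
              (∑ v ∈ img, ((EdgeSet R F (insert x B) (b' v)).ncard : ℝ≥0∞)) ^ w F) *
            ∏ F ∈ E.filter (fun F => ¬ x ∈ F), ((EdgeSet R F B b).ncard : ℝ≥0∞) ^ w F := by
          refine mul_le_mul_left ?_ _
          exact holder_slack img (E.filter (fun F => x ∈ F))
            (fun F v => ((EdgeSet R F (insert x B) (b' v)).ncard : ℝ≥0∞)) w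
            (fun F hF => hw0 F (Finset.mem_filter.1 hF).1) hβ
      _ ≤ (∏ F ∈ E.filter (fun F => x ∈ F), ((EdgeSet R F B b).ncard : ℝ≥0∞) ^ w F) *
            ∏ F ∈ E.filter (fun F => ¬ x ∈ F), ((EdgeSet R F B b).ncard : ℝ≥0∞) ^ w F := by
          refine mul_le_mul_left (Finset.prod_le_prod' fun F hF => ?_) _
          obtain ⟨hFE, hxF⟩ := Finset.mem_filter.1 hF
          exact ENNReal.rpow_le_rpow (hsum F hFE hxF) (hw0 F hFE)
      _ = ∏ F ∈ E, ((EdgeSet R F B b).ncard : ℝ≥0∞) ^ w F :=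
          Finset.prod_filter_mul_prod_filter_not E _ _

end AGM


/-- Let `H = (V, E)` be a hypergraph with a finite relation `R F` over each
hyperedge `F ∈ E`, let `Vb` be a proper subset of `V`, let `u` be a fractional edge cover
of `V`, and let `α` be its slack.  Then for every tuple `a` over `Vb`, the number of
tuples `t` in the join `⋈_{F ∈ E} R_F` with `t[Vb] = a` is at most
`∏_{F ∈ E} |R_F(a)| ^ (u F / α)`. -/
theorem stmt2 {V : Type*} [Fintype V] [DecidableEq V]
    (D : V → Type*)
    (E : Finset (Finset V))
    (hcover : ∀ x : V, ∃ F ∈ E, x ∈ F)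
    (R : (F : Finset V) → Set ((x : F) → D x.1))
    (hRfin : ∀ F ∈ E, (R F).Finite)
    (Vb : Finset V) (hVb : Vb ≠ Finset.univ)
    (u : Finset V → ℝ)
    (hu0 : ∀ F ∈ E, 0 ≤ u F)
    (hucov : ∀ x : V, 1 ≤ ∑ F ∈ E, if x ∈ F then u F else 0)
    (α : ℝ)
    (hα : IsLeast {s : ℝ | ∃ x : V, x ∉ Vb ∧ s = ∑ F ∈ E, if x ∈ F then u F else 0} α)
    (a : (x : Vb) → D x.1) :
    (({t : (x : V) → D x |
        (∀ F ∈ E, (fun x : F => t x.1) ∈ R F) ∧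
        (fun x : Vb => t x.1) = a}).ncard : ℝ)
      ≤ ∏ F ∈ E,
          (({s ∈ R F | ∀ (x : V) (hF : x ∈ F) (hb : x ∈ Vb),
              s ⟨x, hF⟩ = a ⟨x, hb⟩}).ncard : ℝ) ^ (u F / α) := by
  classical
  obtain ⟨⟨x0, hx0, hαeq⟩, hlb⟩ := hα
  have hα1 : 1 ≤ α := hαeq ▸ hucov x0
  have hα0 : 0 < α := lt_of_lt_of_le one_pos hα1
  set w : Finset V → ℝ := fun F => u F / α with hwdef
  have hw0 : ∀ F ∈ E, 0 ≤ w F := fun F hF => div_nonneg (hu0 F hF) hα0.le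
  have hcov' : ∀ x ∉ Vb, 1 ≤ ∑ F ∈ E, if x ∈ F then w F else 0 := by
    intro x hxVb
    have hle : α ≤ ∑ F ∈ E, if x ∈ F then u F else 0 := hlb ⟨x, hxVb, rfl⟩
    have heq : ∑ F ∈ E, (if x ∈ F then w F else 0)
        = (∑ F ∈ E, if x ∈ F then u F else 0) / α := by
      rw [Finset.sum_div]
      exact Finset.sum_congr rfl fun F _ => by split <;> simp [hwdef]
    rw [heq, le_div_iff₀ hα0, one_mul]
    exact hle
  set bb : (x : V) → x ∈ Vb → D x := fun x h => a ⟨x, h⟩ with hbb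
  have hJ : {t : (x : V) → D x |
      (∀ F ∈ E, (fun x : F => t x.1) ∈ R F) ∧ (fun x : Vb => t x.1) = a}
      = JoinSet E R Vb bb := by
    ext t
    simp only [JoinSet, Set.mem_setOf_eq, funext_iff]
    constructor
    · rintro ⟨h1, h2⟩
      exact ⟨h1, fun x h => h2 ⟨x, h⟩⟩
    · rintro ⟨h1, h2⟩
      exact ⟨h1, fun x => h2 x.1 x.2⟩
  have key := agm_key E R hRfin w hw0 Vbᶜ.card Vb rfl hcov' bb
  have hfin : ∏ F ∈ E, ((EdgeSet R F Vb bb).ncard : ℝ≥0∞) ^ w F ≠ ⊤ := by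
    refine (ENNReal.prod_lt_top fun F hF => ?_).ne
    exact (ENNReal.rpow_ne_top_of_nonneg (hw0 F hF) (ENNReal.natCast_ne_top _)).lt_top
  have h2 := ENNReal.toReal_mono hfin key
  rw [ENNReal.toReal_natCast, ENNReal.toReal_prod] at h2
  rw [hJ]
  calc ((JoinSet E R Vb bb).ncard : ℝ)
      ≤ ∏ F ∈ E, (((EdgeSet R F Vb bb).ncard : ℝ≥0∞) ^ w F).toReal := h2
    _ = ∏ F ∈ E, ((EdgeSet R F Vb bb).ncard : ℝ) ^ (u F / α) :=
        Finset.prod_congr rfl fun F hF => by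
          rw [← ENNReal.toReal_rpow, ENNReal.toReal_natCast]
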